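/- Let Γ be a finite connected graph, let G ≤ Aut Γ be vertex-transitive and locally primitive on Γ, and let N be a normal subgroup of G having at least three orbits on the vertex set of Γ. Then N is semiregular on the vertices of Γ (i.e., N_α = 1 for every vertex α), and moreover for every vertex α, any two distinct neighbors of α lie in distinct N-orbits. -/
import Mathlib

/-- The automorphism group of a simple graph acts on its vertices. -/
instance graphAutMulAction {V : Type*} {Γ : SimpleGraph V} : MulAction (Γ ≃g Γ) V where
  smul g v := g v
  one_smul _ := rfl
  mul_smul _ _ _ := rfl

/-- The stabilizer of a vertex acts on the neighbor set of that vertex. -/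
instance stabilizerNeighborAction {V : Type*} {Γ : SimpleGraph V} {G : Subgroup (Γ ≃g Γ)}
    {α : V} : MulAction (MulAction.stabilizer G α) (Γ.neighborSet α) where
  smul g v := ⟨(g.1.1 : Γ ≃g Γ) v.1, by
    have h : (g.1.1 : Γ ≃g Γ) α = α := g.2
    have hv : Γ.Adj α v.1 := v.2
    have : Γ.Adj ((g.1.1 : Γ ≃g Γ) α) ((g.1.1 : Γ ≃g Γ) v.1) :=
      (g.1.1 : Γ ≃g Γ).map_adj_iff.mpr hv
    rwa [h] at this⟩
  one_smul _ := Subtype.ext rfl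
  mul_smul _ _ _ := Subtype.ext rfl

/-- A (pre)primitive action: transitive and with only trivial blocks. -/
def IsPrimitiveMulAction (G X : Type*) [Group G] [MulAction G X] : Prop :=
  MulAction.IsPretransitive G X ∧
    ∀ B : Set X, MulAction.IsBlock G B → B.Subsingleton ∨ B = Set.univ

namespace PraegerAux

open MulAction Pointwise

variable {V : Type*} {Γ : SimpleGraph V} {G : Subgroup (Γ ≃g Γ)} {N : Subgroup G}

lemma smul_adj (g : G) {u v : V} (h : Γ.Adj u v) : Γ.Adj (g • u) (g • v) :=
  (g.1 : Γ ≃g Γ).map_adj_iff.mpr h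

lemma smul_adj_N (n : N) {u v : V} (h : Γ.Adj u v) : Γ.Adj (n • u) (n • v) :=
  smul_adj (n : G) h

lemma conj_mem_orbit (hnorm : N.Normal) (g : G) {x y : V} (h : x ∈ orbit N y) :
    g • x ∈ orbit N (g • y) := by
  obtain ⟨n, rfl⟩ := h
  refine ⟨⟨g * n.1 * g⁻¹, hnorm.conj_mem n.1 n.2 g⟩, ?_⟩
  show (g * n.1 * g⁻¹) • (g • y) = g • ((n : G) • y)
  rw [mul_smul, mul_smul, inv_smul_smul]

lemma conj_orbit_eq (hnorm : N.Normal) (g : G) {x y : V} (h : orbit N x = orbit N y) :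
    orbit N (g • x) = orbit N (g • y) :=
  orbit_eq_iff.mpr (conj_mem_orbit hnorm g (orbit_eq_iff.mp h))

end PraegerAux

open MulAction PraegerAux Pointwise in
/-- Praeger's normal quotient theorem, part (i): a normal subgroup with at least three
orbits of a vertex-transitive locally primitive group is semiregular, and distinct
neighbors of a vertex lie in distinct orbits. -/
theorem normal_quotient_semiregular
    {V : Type*} [Fintype V] (Γ : SimpleGraph V)
    (hconn : Γ.Connected)
    (G : Subgroup (Γ ≃g Γ))
    (hvert : ∀ u v : V, ∃ g ∈ G, g • u = v)
    (hprim : ∀ α : V,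
      IsPrimitiveMulAction (MulAction.stabilizer G α) (Γ.neighborSet α))
    (N : Subgroup G) (hnorm : N.Normal)
    (horbits : 3 ≤ Nat.card (MulAction.orbitRel.Quotient N V)) :
    (∀ (n : N) (v : V), n • v = v → n = 1) ∧
    (∀ α u v : V, Γ.Adj α u → Γ.Adj α v → u ≠ v →
      MulAction.orbit N u ≠ MulAction.orbit N v) := by
  have part2 : ∀ α u v : V, Γ.Adj α u → Γ.Adj α v → u ≠ v →
      orbit N u ≠ orbit N v := by
    intro α u v hu hv huv horb
    -- the intersection of the N-orbit of u with Γ(α) is a block for the stabilizer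
    set B : Set (Γ.neighborSet α) := {w | orbit N (w : V) = orbit N u} with hBdef
    have hcoe : ∀ (h : MulAction.stabilizer G α) (w : Γ.neighborSet α),
        ((h • w : Γ.neighborSet α) : V) = (h : G) • (w : V) := fun _ _ => rfl
    have hchar : ∀ (g : MulAction.stabilizer G α) (w : Γ.neighborSet α),
        w ∈ g • B ↔ orbit N (w : V) = orbit N ((g : G) • u) := by
      intro g w
      rw [Set.mem_smul_set_iff_inv_smul_mem]
      constructor
      · intro hw
        have h2 := conj_orbit_eq hnorm (g : G) (hw.out)
        rw [hcoe g⁻¹ w, show ((g⁻¹ : MulAction.stabilizer G α) : G) = (g : G)⁻¹ from rfl,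
          smul_inv_smul] at h2
        exact h2
      · intro hw
        have h2 := conj_orbit_eq hnorm (g : G)⁻¹ hw
        rw [inv_smul_smul] at h2
        show orbit N ((g⁻¹ • w : Γ.neighborSet α) : V) = orbit N u
        rw [hcoe g⁻¹ w, show ((g⁻¹ : MulAction.stabilizer G α) : G) = (g : G)⁻¹ from rfl]
        exact h2
    have hB : IsBlock (MulAction.stabilizer G α) B := by
      intro g₁ g₂ hne
      by_contra hcontra
      rw [Set.not_disjoint_iff] at hcontra
      obtain ⟨w, hw1, hw2⟩ := hcontra
      apply hne
      ext z
      rw [hchar g₁ z, hchar g₂ z,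
        show orbit N ((g₁ : G) • u) = orbit N ((g₂ : G) • u) from by
          rw [← (hchar g₁ w).mp hw1, (hchar g₂ w).mp hw2]]
    rcases (hprim α).2 B hB with hsub | huniv
    · have h1 : (⟨u, hu⟩ : Γ.neighborSet α) ∈ B := rfl
      have h2 : (⟨v, hv⟩ : Γ.neighborSet α) ∈ B := horb.symm
      exact huv (congrArg Subtype.val (hsub h1 h2))
    · -- every neighbourhood lies in a single N-orbit
      have hall : ∀ w : V, Γ.Adj α w → orbit N w = orbit N u := by
        intro w hw
        have : (⟨w, hw⟩ : Γ.neighborSet α) ∈ B := huniv ▸ Set.mem_univ _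
        exact this
      have hvert' : ∀ β : V, ∃ u0 : V, Γ.Adj β u0 ∧
          ∀ w : V, Γ.Adj β w → orbit N w = orbit N u0 := by
        intro β
        obtain ⟨g, hg, hga⟩ := hvert α β
        set g' : G := ⟨g, hg⟩ with hg'
        have hg'α : g' • α = β := hga
        refine ⟨g' • u, hg'α ▸ smul_adj g' hu, ?_⟩
        intro w hw
        have hadj : Γ.Adj α (g'⁻¹ • w) := by
          have := smul_adj g'⁻¹ hw
          rwa [show g'⁻¹ • β = α from by rw [← hg'α, inv_smul_smul]] at this
        have := conj_orbit_eq hnorm g' (hall _ hadj)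
        rwa [smul_inv_smul] at this
      -- every vertex is in the orbit of α or of u, so N has at most two orbits
      have step : ∀ (x y : V), Γ.Walk x y →
          (orbit N y = orbit N α ∨ orbit N y = orbit N u) →
          (orbit N x = orbit N α ∨ orbit N x = orbit N u) := by
        intro x y p
        induction p with
        | nil => exact id
        | @cons x b _ hxb q ih =>
          intro hy
          obtain ⟨u0, hu0adj, hu0⟩ := hvert' b
          have hx : orbit N x = orbit N u0 := hu0 x hxb.symm
          rcases ih hy with hb | hb
          · obtain ⟨n, hn⟩ := orbit_eq_iff.mp hb
            have hadj : Γ.Adj b (n • u) := hn ▸ smul_adj_N n hu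
            have h1 : orbit N (n • u) = orbit N u0 := hu0 _ hadj
            have hnu : orbit N (n • u) = orbit N u := orbit_eq_iff.mpr (mem_orbit u n)
            exact Or.inr (by rw [hx, ← h1, hnu])
          · obtain ⟨n, hn⟩ := orbit_eq_iff.mp hb
            have hadj : Γ.Adj b (n • α) := hn ▸ smul_adj_N n hu.symm
            have h1 : orbit N (n • α) = orbit N u0 := hu0 _ hadj
            have hnα : orbit N (n • α) = orbit N α := orbit_eq_iff.mpr (mem_orbit α n)
            exact Or.inl (by rw [hx, ← h1, hnα])
      have key : ∀ w : V, orbit N w = orbit N α ∨ orbit N w = orbit N u := by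
        intro w
        obtain ⟨p⟩ := hconn.preconnected w α
        exact step w α p (Or.inl rfl)
      have hsurj : Function.Surjective (fun b : Bool =>
          if b then (Quotient.mk (orbitRel N V) α) else Quotient.mk (orbitRel N V) u) := by
        intro q
        obtain ⟨w, rfl⟩ := Quotient.exists_rep q
        rcases key w with h | h
        · refine ⟨true, ?_⟩
          simp only [if_true]
          exact Quotient.sound (orbit_eq_iff.mp h.symm)
        · refine ⟨false, ?_⟩
          simp only [Bool.false_eq_true, if_false]
          exact Quotient.sound (orbit_eq_iff.mp h.symm)
      have hle := Nat.card_le_card_of_surjective _ hsurj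
      have hb : Nat.card Bool = 2 := by simp [Nat.card_eq_fintype_card]
      rw [hb] at hle
      have : (3 : ℕ) ≤ 2 := le_trans horbits hle
      omega
  refine ⟨?_, part2⟩
  intro n v0 hfix
  have step' : ∀ (x y : V), Γ.Walk x y → n • y = y → n • x = x := by
    intro x y p
    induction p with
    | nil => exact id
    | @cons x b _ hxb q ih =>
      intro hy
      by_contra hne
      have hb : n • b = b := ih hy
      have hadj1 : Γ.Adj b x := hxb.symm
      have hadj2 : Γ.Adj b (n • x) := by
        have := smul_adj_N n hxb.symm
        rwa [hb] at this
      have hxne : x ≠ n • x := fun e => hne e.symm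
      have horb : orbit N x ≠ orbit N (n • x) := part2 b x (n • x) hadj1 hadj2 hxne
      exact horb (orbit_eq_iff.mpr (mem_orbit x n)).symm
  have hfixall : ∀ w : V, n • w = w := by
    intro w
    obtain ⟨p⟩ := hconn.preconnected w v0
    exact step' w v0 p hfix
  have : (((n : G) : Γ ≃g Γ)) = 1 := by
    apply RelIso.ext
    intro w
    exact hfixall w
  exact Subtype.ext (Subtype.ext this)
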